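/- Axiom P (alive(U) ∧ dead(U^c) ∧ φ ⇒ D_U (dead(U^c) ⇒ φ)) is valid in every proper generalized epistemic model; conversely, in the canonical model of EC_n + P, if live(Γ) = live(Δ) = U and Γ ∼_U Δ, then Γ = Δ. -/

import Mathlib

/-- Formulas of epistemic logic with distributed knowledge:
atomic propositions, falsum, implication, and `D U φ` for groups `U` of agents. -/
inductive Fml (A : Type) : Type
  | atom : ℕ → Fml A
  | fls : Fml A
  | imp : Fml A → Fml A → Fml A
  | D : Finset A → Fml A → Fml A

namespace Fml
variable {A : Type}
/-- Negation. -/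
def neg (φ : Fml A) : Fml A := imp φ fls
/-- Truth. -/
def tru : Fml A := neg (fls (A := A))
/-- Conjunction. -/
def and (φ ψ : Fml A) : Fml A := neg (imp φ (neg ψ))
/-- `alive U := ¬ D_U ¬⊤`. -/
def alive (U : Finset A) : Fml A := neg (D U (neg tru))
/-- `dead a := K_a ⊥`. -/
def dead (a : A) : Fml A := D {a} fls
end Fml

/-- Propositional tautologies: formulas true under every valuation that
interprets `imp` and `fls` classically (atoms and `D`-formulas arbitrary). -/
def Taut {A : Type} (φ : Fml A) : Prop :=
  ∀ v : Fml A → Prop,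
    (∀ ψ χ : Fml A, v (Fml.imp ψ χ) ↔ (v ψ → v χ)) → ¬ v Fml.fls → v φ

/-- The Hilbert system EC_n extended with an extra set `Ax` of axioms. -/
inductive ProvE {A : Type} [DecidableEq A] (Ax : Set (Fml A)) : Fml A → Prop
  | taut {φ : Fml A} : Taut φ → ProvE Ax φ
  | extra {φ : Fml A} : φ ∈ Ax → ProvE Ax φ
  | mp {φ ψ : Fml A} : ProvE Ax (Fml.imp φ ψ) → ProvE Ax φ → ProvE Ax ψ
  | nec (U : Finset A) {φ : Fml A} : ProvE Ax φ → ProvE Ax (Fml.D U φ)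
  | axK (U : Finset A) (φ ψ : Fml A) :
      ProvE Ax (Fml.imp (Fml.D U (Fml.imp φ ψ)) (Fml.imp (Fml.D U φ) (Fml.D U ψ)))
  | ax4 (U : Finset A) (φ : Fml A) :
      ProvE Ax (Fml.imp (Fml.D U φ) (Fml.D U (Fml.D U φ)))
  | axB (U : Finset A) (φ : Fml A) :
      ProvE Ax (Fml.imp φ (Fml.D U (Fml.neg (Fml.D U (Fml.neg φ)))))
  | axMono {U U' : Finset A} (φ : Fml A) :
      U ⊆ U' → ProvE Ax (Fml.imp (Fml.D U φ) (Fml.D U' φ))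
  | axUnion (U U' : Finset A) :
      ProvE Ax (Fml.imp (Fml.and (Fml.alive U) (Fml.alive U')) (Fml.alive (U ∪ U')))

variable {A : Type} [DecidableEq A]

/-- Consistency with respect to the extended system. -/
def ConSetE (Ax : Set (Fml A)) (Γ : Set (Fml A)) : Prop :=
  ¬ ∃ l : List (Fml A), (∀ ψ ∈ l, ψ ∈ Γ) ∧
      ProvE Ax (Fml.imp (l.foldr Fml.and Fml.tru) Fml.fls)

/-- Maximal consistent sets with respect to the extended system. -/
def MCSE (Ax : Set (Fml A)) (Γ : Set (Fml A)) : Prop :=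
  ConSetE Ax Γ ∧ ∀ φ : Fml A, φ ∉ Γ → ¬ ConSetE Ax (insert φ Γ)

/-- The canonical accessibility relation: `Γ ∼_U Δ` iff `D_U φ ∈ Γ` implies `φ ∈ Δ`. -/
def canRel (U : Finset A) (Γ Δ : Set (Fml A)) : Prop :=
  ∀ φ : Fml A, Fml.D U φ ∈ Γ → φ ∈ Δ

/-- A generalized epistemic model: worlds, a PER `rel U` for each group `U`,
monotone in `U`, closed under union of alive groups, and a valuation. -/
structure GEM (A : Type) [DecidableEq A] where
  W : Type
  rel : Finset A → W → W → Prop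
  symm : ∀ U w w', rel U w w' → rel U w' w
  trans : ∀ U w₁ w₂ w₃, rel U w₁ w₂ → rel U w₂ w₃ → rel U w₁ w₃
  mono : ∀ (U U' : Finset A), U ⊆ U' → ∀ w w', rel U' w w' → rel U w w'
  union : ∀ (U U' : Finset A) w, rel U w w → rel U' w w → rel (U ∪ U') w w
  val : W → ℕ → Prop

/-- The satisfaction relation `M, w ⊨ φ`. -/
def Sat {A : Type} [DecidableEq A] (M : GEM A) : M.W → Fml A → Prop
  | w, Fml.atom p => M.val w p
  | _, Fml.fls => False
  | w, Fml.imp φ ψ => Sat M w φ → Sat M w ψ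
  | w, Fml.D U φ => ∀ w', M.rel U w w' → Sat M w' φ

attribute [local instance] Classical.propDecidable

/-- `dead V := ⋀_{a ∈ V} K_a ⊥`. -/
noncomputable def deadG {A : Type} (V : Finset A) : Fml A :=
  (V.toList.map fun a => Fml.D {a} Fml.fls).foldr Fml.and Fml.tru

variable {A : Type} [DecidableEq A] [Fintype A]

/-- The set of alive agents of a world: those `a` with `w ∼_{{a}} w`
(which, by union closure and monotonicity, is the maximal `U` with `w ∼_U w`). -/
noncomputable def liveF (M : GEM A) (w : M.W) : Finset A :=
  Finset.univ.filter fun a => M.rel {a} w w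

/-- The set of alive agents of a maximal consistent set in the canonical model. -/
noncomputable def liveC (Γ : Set (Fml A)) : Finset A :=
  Finset.univ.filter fun a => canRel {a} Γ Γ

/-- All instances of axiom P: `alive U ∧ dead Uᶜ ∧ φ ⇒ D_U (dead Uᶜ ⇒ φ)`. -/
def AxP : Set (Fml A) :=
  {χ | ∃ (U : Finset A) (φ : Fml A),
    χ = Fml.imp (Fml.and (Fml.alive U) (Fml.and (deadG Uᶜ) φ))
          (Fml.D U (Fml.imp (deadG Uᶜ) φ))}

section MyHelpers

variable {Ax : Set (Fml A)}

private lemma my_taut {φ : Fml A} (h : Taut φ) : ProvE Ax φ := ProvE.taut h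

private lemma prov_trans {φ ψ χ : Fml A} (h1 : ProvE Ax (Fml.imp φ ψ))
    (h2 : ProvE Ax (Fml.imp ψ χ)) : ProvE Ax (Fml.imp φ χ) := by
  refine ProvE.mp (ProvE.mp (my_taut ?_) h1) h2
  intro v hv hf; simp only [hv]; tauto

private lemma conj_head {x : Fml A} {l : List (Fml A)} :
    ProvE Ax (Fml.imp ((x::l).foldr Fml.and Fml.tru) x) := by
  apply my_taut; intro v hv hf
  simp only [List.foldr, Fml.and, Fml.neg, hv]; tauto

private lemma conj_tail {x : Fml A} {l : List (Fml A)} :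
    ProvE Ax (Fml.imp ((x::l).foldr Fml.and Fml.tru) (l.foldr Fml.and Fml.tru)) := by
  apply my_taut; intro v hv hf
  simp only [List.foldr, Fml.and, Fml.neg, hv]; tauto

private lemma conj_mem {l : List (Fml A)} {x : Fml A} (h : x ∈ l) :
    ProvE Ax (Fml.imp (l.foldr Fml.and Fml.tru) x) := by
  induction l with
  | nil => cases h
  | cons y l ih =>
    rcases List.mem_cons.mp h with rfl | h
    · exact conj_head
    · exact prov_trans conj_tail (ih h)

private lemma conj_intro {l : List (Fml A)} {χ : Fml A}
    (h : ∀ x ∈ l, ProvE Ax (Fml.imp χ x)) :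
    ProvE Ax (Fml.imp χ (l.foldr Fml.and Fml.tru)) := by
  induction l with
  | nil =>
    apply my_taut; intro v hv hf
    simp only [List.foldr, Fml.tru, Fml.neg, hv]; tauto
  | cons y l ih =>
    have hy := h y (by simp)
    have hl := ih fun x hx => h x (by simp [hx])
    have t : ProvE Ax (Fml.imp (Fml.imp χ y)
        (Fml.imp (Fml.imp χ (l.foldr Fml.and Fml.tru))
          (Fml.imp χ ((y::l).foldr Fml.and Fml.tru)))) := by
      apply my_taut; intro v hv hf
      simp only [List.foldr, Fml.and, Fml.neg, hv]; tauto
    exact ProvE.mp (ProvE.mp t hy) hl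

private lemma mcs_closed {Γ : Set (Fml A)} (hΓ : MCSE Ax Γ) {l : List (Fml A)} {ψ : Fml A}
    (hl : ∀ x ∈ l, x ∈ Γ) (hp : ProvE Ax (Fml.imp (l.foldr Fml.and Fml.tru) ψ)) :
    ψ ∈ Γ := by
  by_contra hψ
  have h2 := hΓ.2 ψ hψ
  simp only [ConSetE, not_not] at h2
  obtain ⟨l', hl', hp'⟩ := h2
  set m := l ++ l'.filter (fun x => decide (x ≠ ψ)) with hmdef
  have hmΓ : ∀ x ∈ m, x ∈ Γ := by
    intro x hx
    rcases List.mem_append.mp hx with h | h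
    · exact hl x h
    · have hf := List.mem_filter.mp h
      rcases Set.mem_insert_iff.mp (hl' x hf.1) with h' | h'
      · exact absurd h' (of_decide_eq_true hf.2)
      · exact h'
  have hconj_l : ProvE Ax (Fml.imp (m.foldr Fml.and Fml.tru) (l.foldr Fml.and Fml.tru)) :=
    conj_intro fun x hx => conj_mem (List.mem_append_left _ hx)
  have hmψ : ProvE Ax (Fml.imp (m.foldr Fml.and Fml.tru) ψ) := prov_trans hconj_l hp
  have hml' : ∀ x ∈ l', ProvE Ax (Fml.imp (m.foldr Fml.and Fml.tru) x) := by
    intro x hx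
    by_cases hxψ : x = ψ
    · subst hxψ; exact hmψ
    · exact conj_mem (List.mem_append_right _
        (List.mem_filter.mpr ⟨hx, by simp [hxψ]⟩))
  have hfls : ProvE Ax (Fml.imp (m.foldr Fml.and Fml.tru) Fml.fls) :=
    prov_trans (conj_intro hml') hp'
  exact hΓ.1 ⟨m, hmΓ, hfls⟩

private lemma mcs_prov {Γ : Set (Fml A)} (hΓ : MCSE Ax Γ) {ψ : Fml A}
    (h : ProvE Ax ψ) : ψ ∈ Γ := by
  apply mcs_closed hΓ (l := []) (fun x hx => absurd hx List.not_mem_nil)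
  refine ProvE.mp (my_taut ?_) h
  intro v hv hf; simp only [List.foldr, hv]; tauto

private lemma mcs_mp {Γ : Set (Fml A)} (hΓ : MCSE Ax Γ) {φ ψ : Fml A}
    (h1 : Fml.imp φ ψ ∈ Γ) (h2 : φ ∈ Γ) : ψ ∈ Γ := by
  apply mcs_closed hΓ (l := [Fml.imp φ ψ, φ])
  · intro x hx
    simp only [List.mem_cons, List.not_mem_nil, or_false] at hx
    rcases hx with rfl | rfl <;> assumption
  · apply my_taut; intro v hv hf
    simp only [List.foldr, Fml.and, Fml.neg, Fml.tru, hv]; tauto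

private lemma mcs_fls {Γ : Set (Fml A)} (hΓ : MCSE Ax Γ) : Fml.fls ∉ Γ := by
  intro h
  exact hΓ.1 ⟨[Fml.fls], by simpa using h, conj_head⟩

private lemma mcs_neg {Γ : Set (Fml A)} (hΓ : MCSE Ax Γ) {φ : Fml A}
    (h : φ ∉ Γ) : Fml.neg φ ∈ Γ := by
  have h2 := hΓ.2 φ h
  simp only [ConSetE, not_not] at h2
  obtain ⟨l', hl', hp'⟩ := h2
  set m := l'.filter (fun x => decide (x ≠ φ)) with hmdef
  have hmΓ : ∀ x ∈ m, x ∈ Γ := by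
    intro x hx
    have hf := List.mem_filter.mp hx
    rcases Set.mem_insert_iff.mp (hl' x hf.1) with h' | h'
    · exact absurd h' (of_decide_eq_true hf.2)
    · exact h'
  apply mcs_closed hΓ hmΓ
  have hstep : ∀ x ∈ l', ProvE Ax (Fml.imp ((φ::m).foldr Fml.and Fml.tru) x) := by
    intro x hx
    by_cases hxφ : x = φ
    · subst hxφ; exact conj_head
    · exact prov_trans conj_tail (conj_mem (List.mem_filter.mpr ⟨hx, by simp [hxφ]⟩))
  have hc : ProvE Ax (Fml.imp ((φ::m).foldr Fml.and Fml.tru) Fml.fls) :=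
    prov_trans (conj_intro hstep) hp'
  have t : ProvE Ax (Fml.imp (Fml.imp ((φ::m).foldr Fml.and Fml.tru) Fml.fls)
      (Fml.imp (m.foldr Fml.and Fml.tru) (Fml.neg φ))) := by
    apply my_taut; intro v hv hf
    simp only [List.foldr, Fml.and, Fml.neg, hv]; tauto
  exact ProvE.mp t hc

private lemma mcs_and {Γ : Set (Fml A)} (hΓ : MCSE Ax Γ) {φ ψ : Fml A}
    (h1 : φ ∈ Γ) (h2 : ψ ∈ Γ) : Fml.and φ ψ ∈ Γ := by
  apply mcs_closed hΓ (l := [φ, ψ])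
  · intro x hx
    simp only [List.mem_cons, List.not_mem_nil, or_false] at hx
    rcases hx with rfl | rfl <;> assumption
  · apply my_taut; intro v hv hf
    simp only [List.foldr, Fml.and, Fml.neg, Fml.tru, hv]; tauto

private lemma mcs_dead {Γ : Set (Fml A)} (hΓ : MCSE Ax Γ) {V : Finset A} {φ : Fml A}
    (hD : Fml.D V φ ∈ Γ) (hφ : φ ∉ Γ) : Fml.D V Fml.fls ∈ Γ := by
  have hnφ : Fml.neg φ ∈ Γ := mcs_neg hΓ hφ
  set p := Fml.D V (Fml.neg (Fml.neg φ)) with hpdef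
  have hB : Fml.D V (Fml.neg p) ∈ Γ :=
    mcs_mp hΓ (mcs_prov hΓ (ProvE.axB V (Fml.neg φ))) hnφ
  have hdn : p ∈ Γ := by
    have t : ProvE Ax (Fml.imp φ (Fml.neg (Fml.neg φ))) := by
      apply my_taut; intro v hv hf; simp only [Fml.neg, hv]; tauto
    have k := ProvE.mp (ProvE.axK V φ (Fml.neg (Fml.neg φ))) (ProvE.nec V t)
    exact mcs_mp hΓ (mcs_prov hΓ k) hD
  have h4 : Fml.D V p ∈ Γ :=
    mcs_mp hΓ (mcs_prov hΓ (ProvE.ax4 V (Fml.neg (Fml.neg φ)))) hdn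
  have t2 : ProvE Ax (Fml.imp p (Fml.imp (Fml.neg p) Fml.fls)) := by
    apply my_taut; intro v hv hf; simp only [Fml.neg, hv]; tauto
  have k1 : ProvE Ax (Fml.imp (Fml.D V p) (Fml.D V (Fml.imp (Fml.neg p) Fml.fls))) :=
    ProvE.mp (ProvE.axK V p (Fml.imp (Fml.neg p) Fml.fls)) (ProvE.nec V t2)
  have m1 : Fml.D V (Fml.imp (Fml.neg p) Fml.fls) ∈ Γ := mcs_mp hΓ (mcs_prov hΓ k1) h4
  exact mcs_mp hΓ (mcs_mp hΓ (mcs_prov hΓ (ProvE.axK V (Fml.neg p) Fml.fls)) m1) hB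

private lemma sat_and {M : GEM A} {w : M.W} {φ ψ : Fml A} :
    Sat M w (Fml.and φ ψ) ↔ (Sat M w φ ∧ Sat M w ψ) := by
  simp only [Fml.and, Fml.neg, Sat]; tauto

private lemma sat_conj {M : GEM A} {w : M.W} (l : List (Fml A)) :
    Sat M w (l.foldr Fml.and Fml.tru) ↔ ∀ x ∈ l, Sat M w x := by
  induction l with
  | nil => simp [Fml.tru, Fml.neg, Sat]
  | cons x l ih =>
    rw [List.foldr_cons, sat_and, ih]
    simp [List.forall_mem_cons]

end MyHelpers

/-- Axiom P is valid in every proper generalized epistemic model; conversely,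
in the canonical model of EC_n + P, if `live(Γ) = live(Δ) = U` and `Γ ∼_U Δ`,
then `Γ = Δ`. -/
theorem stmt14 :
    (∀ M : GEM A,
      (∀ w w' : M.W, liveF M w = liveF M w' → M.rel (liveF M w) w w' → w = w') →
      ∀ (w : M.W) (U : Finset A) (φ : Fml A),
        Sat M w (Fml.imp (Fml.and (Fml.alive U) (Fml.and (deadG Uᶜ) φ))
          (Fml.D U (Fml.imp (deadG Uᶜ) φ)))) ∧
    (∀ (Γ Δ : Set (Fml A)) (U : Finset A), MCSE (AxP (A := A)) Γ → MCSE AxP Δ →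
      liveC Γ = U → liveC Δ = U → canRel U Γ Δ → Γ = Δ) := by
  constructor
  · -- soundness of axiom P on proper models
    intro M hproper w U φ
    intro hant w' hrel hdw'
    obtain ⟨halive, hrest⟩ := sat_and.mp hant
    obtain ⟨hdead, hφ⟩ := sat_and.mp hrest
    have hww : M.rel U w w := by
      have h1 : ¬ ∀ w'', M.rel U w w'' → Sat M w'' (Fml.neg Fml.tru) := halive
      by_contra hnot
      apply h1
      intro w'' hw''
      exact (hnot (M.trans U w w'' w hw'' (M.symm U w w'' hw''))).elim
    have hw'w' : M.rel U w' w' := M.trans U w' w w' (M.symm U w w' hrel) hrel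
    unfold deadG at hdead hdw'
    rw [sat_conj] at hdead hdw'
    have hdw : ∀ a ∈ Uᶜ, ¬ M.rel {a} w w := by
      intro a ha hr
      exact hdead _ (List.mem_map.mpr ⟨a, Finset.mem_toList.mpr ha, rfl⟩) w hr
    have hdw'2 : ∀ a ∈ Uᶜ, ¬ M.rel {a} w' w' := by
      intro a ha hr
      exact hdw' _ (List.mem_map.mpr ⟨a, Finset.mem_toList.mpr ha, rfl⟩) w' hr
    have hlw : liveF M w = U := by
      ext a
      simp only [liveF, Finset.mem_filter, Finset.mem_univ, true_and]
      constructor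
      · intro hr
        by_contra ha
        exact hdw a (Finset.mem_compl.mpr ha) hr
      · intro ha
        exact M.mono {a} U (Finset.singleton_subset_iff.mpr ha) w w hww
    have hlw' : liveF M w' = U := by
      ext a
      simp only [liveF, Finset.mem_filter, Finset.mem_univ, true_and]
      constructor
      · intro hr
        by_contra ha
        exact hdw'2 a (Finset.mem_compl.mpr ha) hr
      · intro ha
        exact M.mono {a} U (Finset.singleton_subset_iff.mpr ha) w' w' hw'w'
    have heq : w = w' := hproper w w' (by rw [hlw, hlw']) (by rw [hlw]; exact hrel)
    exact heq ▸ hφ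
  · -- properness of the canonical model
    intro Γ Δ U hΓ hΔ hlΓ hlΔ hcan
    have hdeadmem : ∀ (Θ : Set (Fml A)), MCSE (AxP (A := A)) Θ → liveC Θ = U →
        deadG Uᶜ ∈ Θ := by
      intro Θ hΘ hlΘ
      apply mcs_closed hΘ (l := Uᶜ.toList.map fun a => Fml.D {a} Fml.fls)
      · intro x hx
        obtain ⟨a, ha, rfl⟩ := List.mem_map.mp hx
        have haU : a ∉ U := Finset.mem_compl.mp (Finset.mem_toList.mp ha)
        have hnc : ¬ canRel {a} Θ Θ := by
          intro hc
          apply haU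
          rw [← hlΘ]
          simp only [liveC, Finset.mem_filter, Finset.mem_univ, true_and]
          exact hc
        simp only [canRel, not_forall] at hnc
        obtain ⟨ψ, hDψ, hψ⟩ := hnc
        exact mcs_dead hΘ hDψ hψ
      · show ProvE (AxP (A := A)) (Fml.imp _ (deadG Uᶜ))
        unfold deadG
        apply my_taut; intro v hv hf
        simp only [hv]; exact id
    have halive : Fml.alive U ∈ Γ := by
      have hnot : Fml.D U (Fml.neg Fml.tru) ∉ Γ := by
        intro h
        have h1 : Fml.neg Fml.tru ∈ Δ := hcan _ h
        have h2 : Fml.tru ∈ Δ := mcs_prov hΔ (my_taut (by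
          intro v hv hf; simp only [Fml.tru, Fml.neg, hv]; tauto))
        exact mcs_fls hΔ (mcs_mp hΔ h1 h2)
      exact mcs_neg hΓ hnot
    have hsub : ∀ ψ ∈ Γ, ψ ∈ Δ := by
      intro ψ hψ
      have hax : ProvE (AxP (A := A))
          (Fml.imp (Fml.and (Fml.alive U) (Fml.and (deadG Uᶜ) ψ))
            (Fml.D U (Fml.imp (deadG Uᶜ) ψ))) := ProvE.extra ⟨U, ψ, rfl⟩
      have hant := mcs_and hΓ halive (mcs_and hΓ (hdeadmem Γ hΓ hlΓ) hψ)
      have hDm : Fml.D U (Fml.imp (deadG Uᶜ) ψ) ∈ Γ :=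
        mcs_mp hΓ (mcs_prov hΓ hax) hant
      exact mcs_mp hΔ (hcan _ hDm) (hdeadmem Δ hΔ hlΔ)
    ext ψ
    constructor
    · exact hsub ψ
    · intro hψ
      by_contra hnψ
      have hn := hsub _ (mcs_neg hΓ hnψ)
      exact mcs_fls hΔ (mcs_mp hΔ hn hψ)
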